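/- Let σ₀ be the standard n-cycle, Γ₁ ⊊ Γ_{σ₀} a proper subset with chain-closure Π₁ ⊆ {(i,j) : i ≠ j}, assume (n,1) ∉ Γ₁ (so every (i,j) ∈ Π₁ has i < j), and fix m with corresponding subsets M(O) = {(i,j) : (i < m and j < m) or (i ≥ m and j ≥ m)}. Let σ ∈ S_n and define the linear operator θ⁺ on Mat_n(k) by θ⁺(e_{ij}) = e_{σ(i)σ(j)} if (i,j) ∈ Π₁ and (i,j) ∈ M(O) (after projecting appropriately), and θ⁺(e_{ij}) = 0 otherwise, where for each (i,j) ∈ Π₁ there exists a positive integer r with (σ^r(i), σ^r(j)) ∉ Π₁. Then θ⁺ is nilpotent. -/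

import Mathlib

open Matrix

/-- The operator `θ⁺ = σ ∘ π_{A₁⁺} ∘ π_O` on `Mat_n(k)`: it sends the matrix unit `e_{ij}` to
`e_{σ(i)σ(j)}` when `(i,j) ∈ Π₁` and `(i,j) ∈ M(O)` (i.e. `i,j < m` or `i,j ≥ m`),
and to `0` otherwise. -/
noncomputable def thetaPlus (k : Type*) [Field k] {n : ℕ} (σ : Equiv.Perm (Fin n))
    (Pi1 : Finset (Fin n × Fin n)) (m : Fin n) :
    Module.End k (Matrix (Fin n) (Fin n) k) where
  toFun a := Matrix.of fun i j =>
    if (σ.symm i, σ.symm j) ∈ Pi1 ∧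
        ((σ.symm i < m ∧ σ.symm j < m) ∨ (m ≤ σ.symm i ∧ m ≤ σ.symm j))
      then a (σ.symm i) (σ.symm j) else 0
  map_add' a b := by
    ext i j
    simp only [Matrix.of_apply, Matrix.add_apply]
    split <;> simp
  map_smul' c a := by
    ext i j
    simp only [Matrix.of_apply, Matrix.smul_apply, RingHom.id_apply]
    split <;> simp

lemma theta_pow_apply {k : Type*} [Field k] {n : ℕ} (σ : Equiv.Perm (Fin n))
    (Pi1 : Finset (Fin n × Fin n)) (m : Fin n) (N : ℕ) (a : Matrix (Fin n) (Fin n) k)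
    (i j : Fin n) :
    ((thetaPlus k σ Pi1 m ^ N) a) i j =
      if (∀ t < N, ((σ⁻¹ ^ (t+1)) i, (σ⁻¹ ^ (t+1)) j) ∈ Pi1 ∧
          (((σ⁻¹ ^ (t+1)) i < m ∧ (σ⁻¹ ^ (t+1)) j < m) ∨
            (m ≤ (σ⁻¹ ^ (t+1)) i ∧ m ≤ (σ⁻¹ ^ (t+1)) j)))
      then a ((σ⁻¹ ^ N) i) ((σ⁻¹ ^ N) j) else 0 := by
  induction N generalizing a with
  | zero => simp
  | succ N IH =>
    rw [pow_succ, Module.End.mul_apply, IH]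
    have hsymm : ∀ x : Fin n, σ.symm x = σ⁻¹ x := fun _ => rfl
    have hstep : ∀ x : Fin n, σ⁻¹ ((σ⁻¹ ^ N) x) = (σ⁻¹ ^ (N+1)) x := by
      intro x
      rw [pow_succ' σ⁻¹ N, Equiv.Perm.mul_apply]
    have happ : (thetaPlus k σ Pi1 m a) ((σ⁻¹ ^ N) i) ((σ⁻¹ ^ N) j) =
        if (((σ⁻¹ ^ (N+1)) i, (σ⁻¹ ^ (N+1)) j) ∈ Pi1 ∧
            (((σ⁻¹ ^ (N+1)) i < m ∧ (σ⁻¹ ^ (N+1)) j < m) ∨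
              (m ≤ (σ⁻¹ ^ (N+1)) i ∧ m ≤ (σ⁻¹ ^ (N+1)) j)))
        then a ((σ⁻¹ ^ (N+1)) i) ((σ⁻¹ ^ (N+1)) j) else 0 := by
      simp only [thetaPlus, LinearMap.coe_mk, AddHom.coe_mk, Matrix.of_apply, hsymm, hstep]
    rw [happ]
    have hiff : (∀ t < N + 1, ((σ⁻¹ ^ (t+1)) i, (σ⁻¹ ^ (t+1)) j) ∈ Pi1 ∧
          (((σ⁻¹ ^ (t+1)) i < m ∧ (σ⁻¹ ^ (t+1)) j < m) ∨
            (m ≤ (σ⁻¹ ^ (t+1)) i ∧ m ≤ (σ⁻¹ ^ (t+1)) j))) ↔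
        ((∀ t < N, ((σ⁻¹ ^ (t+1)) i, (σ⁻¹ ^ (t+1)) j) ∈ Pi1 ∧
          (((σ⁻¹ ^ (t+1)) i < m ∧ (σ⁻¹ ^ (t+1)) j < m) ∨
            (m ≤ (σ⁻¹ ^ (t+1)) i ∧ m ≤ (σ⁻¹ ^ (t+1)) j))) ∧
         (((σ⁻¹ ^ (N+1)) i, (σ⁻¹ ^ (N+1)) j) ∈ Pi1 ∧
          (((σ⁻¹ ^ (N+1)) i < m ∧ (σ⁻¹ ^ (N+1)) j < m) ∨
            (m ≤ (σ⁻¹ ^ (N+1)) i ∧ m ≤ (σ⁻¹ ^ (N+1)) j)))) := by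
      constructor
      · intro h
        exact ⟨fun t ht => h t (ht.trans (Nat.lt_succ_self N)), h N (Nat.lt_succ_self N)⟩
      · rintro ⟨h1, h2⟩ t ht
        rcases Nat.lt_succ_iff_lt_or_eq.mp ht with h | h
        · exact h1 t h
        · subst h; exact h2
    split_ifs with hA hB hB <;> first | rfl | (exfalso; tauto)

/-- if every `(i,j) ∈ Π₁` satisfies `i < j` and for every `α ∈ Π₁` there is some
`r > 0` with `σ^r(α) ∉ Π₁`, then the operator `θ⁺` is nilpotent. -/
theorem stmt8 {k : Type*} [Field k] {n : ℕ} (σ : Equiv.Perm (Fin n))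
    (Pi1 : Finset (Fin n × Fin n)) (m : Fin n)
    (hlt : ∀ p ∈ Pi1, p.1 < p.2)
    (hexit : ∀ p ∈ Pi1, ∃ r : ℕ, 0 < r ∧ ((σ ^ r) p.1, (σ ^ r) p.2) ∉ Pi1) :
    IsNilpotent (thetaPlus k σ Pi1 m) := by
  classical
  set f : Fin n × Fin n → ℕ := fun p => if h : p ∈ Pi1 then (hexit p h).choose else 0 with hf
  set S : ℕ := Finset.univ.sup f with hS
  refine ⟨S + 1, ?_⟩
  ext a i j
  rw [theta_pow_apply]
  simp only [LinearMap.zero_apply, Matrix.zero_apply]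
  rw [if_neg]
  intro hall
  set N := S + 1 with hN
  set p : Fin n × Fin n := ((σ⁻¹ ^ N) i, (σ⁻¹ ^ N) j) with hp
  by_cases hmem : p ∈ Pi1
  · obtain ⟨hrpos, hnot⟩ := (hexit p hmem).choose_spec
    set r := (hexit p hmem).choose with hr
    have hfp : f p = r := by rw [hf]; simp [hmem]; rfl
    have hrS : r ≤ S := hfp ▸ Finset.le_sup (Finset.mem_univ p)
    have hrN : r < N := Nat.lt_succ_of_le hrS
    have hkey : ∀ x : Fin n, (σ ^ r) ((σ⁻¹ ^ N) x) = (σ⁻¹ ^ (N - r)) x := by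
      intro x
      have h1 : σ⁻¹ ^ N = σ⁻¹ ^ r * σ⁻¹ ^ (N - r) := by
        rw [← pow_add, Nat.add_sub_cancel' hrN.le]
      have : σ ^ r * σ⁻¹ ^ N = σ⁻¹ ^ (N - r) := by
        rw [h1, ← mul_assoc, inv_pow, mul_inv_cancel, one_mul]
      calc (σ ^ r) ((σ⁻¹ ^ N) x) = (σ ^ r * σ⁻¹ ^ N) x := rfl
        _ = (σ⁻¹ ^ (N - r)) x := by rw [this]
    have htlt : N - r - 1 < N := by omega
    have ht1 : N - r - 1 + 1 = N - r := by omega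
    have := (hall (N - r - 1) htlt).1
    rw [ht1] at this
    exact hnot (by rwa [← hkey i, ← hkey j] at this)
  · have := (hall (N - 1) (by omega)).1
    have ht1 : N - 1 + 1 = N := by omega
    rw [ht1] at this
    exact hmem this
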